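/- Fix an integer k ≥ 1. Then |H(k,k;n)| · k!·k!·(2k−1)! / n^{2k−1} → 1 as n → ∞; that is, the number of partitions of n in the (k,k)-hook is asymptotically n^{2k−1} / (k!·k!·(2k−1)!). -/

import Mathlib

open Finset

/-- `H(k,l;n)`: the set of partitions of `n` in the `(k,l)`-hook, i.e. Young diagrams
with `n` cells (the `(i+1)`-st part being `rowLen i`) with `λ_{k+1} ≤ l`. -/
def hook (k l n : ℕ) : Set YoungDiagram :=
  {μ | μ.card = n ∧ μ.rowLen k ≤ l}

namespace Stmt19


/-! ### Power sum estimates -/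

lemma powQ' (x d : ℕ) : (x+1)^(d+1) ≤ x^(d+1) + (d+1)*(x+1)^d := by
  induction d with
  | zero => simp [pow_succ]
  | succ d ih =>
    calc (x+1)^(d+2) = (x+1)^(d+1) * (x+1) := by ring
    _ ≤ (x^(d+1) + (d+1)*(x+1)^d) * (x+1) := by exact Nat.mul_le_mul_right _ ih
    _ = x^(d+2) + x^(d+1) + (d+1)*(x+1)^(d+1) := by ring
    _ ≤ x^(d+2) + (x+1)^(d+1) + (d+1)*(x+1)^(d+1) := by
        have : x^(d+1) ≤ (x+1)^(d+1) := Nat.pow_le_pow_left (Nat.le_succ x) _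
        omega
    _ = x^(d+2) + (d+2)*(x+1)^(d+1) := by ring

lemma powQ (x d : ℕ) : x^(d+1) + (d+1)*x^d ≤ (x+1)^(d+1) := by
  induction d with
  | zero => simp [pow_succ]
  | succ d ih =>
    calc x^(d+2) + (d+2)*x^(d+1) = (x^(d+1) + (d+1)*x^d) * x + x^(d+1) := by ring
    _ ≤ (x+1)^(d+1) * x + x^(d+1) := by
        have : x^(d+1) ≤ (x+1)^(d+1) := Nat.pow_le_pow_left (Nat.le_succ x) _
        nlinarith
    _ ≤ (x+1)^(d+1) * x + (x+1)^(d+1) := by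
        have : x^(d+1) ≤ (x+1)^(d+1) := Nat.pow_le_pow_left (Nat.le_succ x) _
        omega
    _ = (x+1)^(d+2) := by ring

lemma P1 (N d : ℕ) : N^(d+1) ≤ (d+1) * ∑ m ∈ range (N+1), m^d := by
  induction N with
  | zero => simp
  | succ N ih =>
    rw [Finset.sum_range_succ, Nat.mul_add]
    calc (N+1)^(d+1) ≤ N^(d+1) + (d+1)*(N+1)^d := powQ' N d
    _ ≤ (d+1) * ∑ m ∈ range (N+1), m^d + (d+1)*(N+1)^d := by omega

lemma P2 (N d : ℕ) : (d+1) * ∑ m ∈ range (N+1), m^d ≤ (N+1)^(d+1) := by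
  induction N with
  | zero => cases d <;> simp
  | succ N ih =>
    rw [Finset.sum_range_succ, Nat.mul_add]
    calc (d+1) * ∑ m ∈ range (N+1), m^d + (d+1)*(N+1)^d
        ≤ (N+1)^(d+1) + (d+1)*(N+1)^d := by omega
    _ ≤ (N+2)^(d+1) := powQ (N+1) d

/-! ### Weighted solution counts -/

variable {ι : Type*} [Fintype ι] [DecidableEq ι]

/-- Functions `f : ι → ℕ` with `∑ i, w i * f i ≤ n`. -/
def wSumLE (w : ι → ℕ) (n : ℕ) : Finset (ι → ℕ) :=
  (Fintype.piFinset fun _ => range (n+1)).filter fun f => ∑ i, w i * f i ≤ n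

lemma mem_wSumLE {w : ι → ℕ} (hw : ∀ i, 1 ≤ w i) {n : ℕ} {f : ι → ℕ} :
    f ∈ wSumLE w n ↔ ∑ i, w i * f i ≤ n := by
  simp only [wSumLE, Finset.mem_filter, Fintype.mem_piFinset, Finset.mem_range]
  constructor
  · rintro ⟨-, h⟩; exact h
  · intro h
    refine ⟨fun i => ?_, h⟩
    have : w i * f i ≤ ∑ j, w j * f j :=
      Finset.single_le_sum (f := fun j => w j * f j) (fun j _ => Nat.zero_le _) (Finset.mem_univ i)
    have : f i ≤ w i * f i := Nat.le_mul_of_pos_left _ (hw i)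
    omega

/-- unweighted count over `Fin d` -/
def sumLE (d n : ℕ) : Finset (Fin d → ℕ) := wSumLE (fun _ => 1) n

lemma mem_sumLE {d n : ℕ} {f : Fin d → ℕ} : f ∈ sumLE d n ↔ ∑ i, f i ≤ n := by
  rw [sumLE, mem_wSumLE (fun _ => le_refl 1)]
  simp

lemma card_sumLE_zero (n : ℕ) : (sumLE 0 n).card = 1 := by
  apply le_antisymm
  · exact Finset.card_le_one.mpr (fun a _ b _ => Subsingleton.elim a b)
  · exact Finset.card_pos.mpr ⟨fun _ => 0, by simp [mem_sumLE]⟩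

lemma card_sumLE_succ (d n : ℕ) :
    (sumLE (d+1) n).card = ∑ j ∈ range (n+1), (sumLE d (n - j)).card := by
  rw [Finset.card_eq_sum_card_fiberwise (f := fun f => f 0) (t := range (n+1))]
  · apply Finset.sum_congr rfl
    intro j hj
    rw [Finset.mem_range] at hj
    apply Finset.card_nbij' (i := fun f => Fin.tail f) (j := fun g => Fin.cons j g)
    · intro f hf
      simp only [Finset.mem_coe, Finset.mem_filter, mem_sumLE] at hf
      rw [Finset.mem_coe, mem_sumLE]
      beta_reduce
      obtain ⟨hf, h0⟩ := hf
      rw [Fin.sum_univ_succ] at hf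
      subst h0
      have : ∑ i : Fin d, Fin.tail f i = ∑ i : Fin d, f i.succ := rfl
      omega
    · intro g hg
      rw [Finset.mem_coe, mem_sumLE] at hg
      simp only [Finset.mem_coe, Finset.mem_filter, mem_sumLE, Fin.cons_zero, and_true]
      rw [Fin.sum_univ_succ, Fin.cons_zero]
      have : ∑ i : Fin d, (Fin.cons j g : Fin (d+1) → ℕ) i.succ = ∑ i : Fin d, g i := by
        apply Finset.sum_congr rfl; intros; simp
      omega
    · intro f hf
      simp only [Finset.mem_coe, Finset.mem_filter] at hf
      rw [← hf.2]
      exact Fin.cons_self_tail f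
    · intro g hg
      exact Fin.tail_cons (α := fun _ => ℕ) j g
  · intro f hf
    rw [Finset.mem_coe, mem_sumLE] at hf
    rw [Finset.mem_coe, Finset.mem_range]
    beta_reduce
    have : f 0 ≤ ∑ i, f i := Finset.single_le_sum (fun j _ => Nat.zero_le _) (Finset.mem_univ 0)
    omega

lemma sumLE_lower (d n : ℕ) : n^d ≤ d.factorial * (sumLE d n).card := by
  induction d generalizing n with
  | zero => simp [card_sumLE_zero]
  | succ d ih =>
    rw [card_sumLE_succ]
    calc n^(d+1) ≤ (d+1) * ∑ m ∈ range (n+1), m^d := P1 n d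
    _ = (d+1) * ∑ j ∈ range (n+1), (n-j)^d := by
        congr 1
        rw [← Finset.sum_range_reflect]
        apply Finset.sum_congr rfl
        intro j hj; rw [Finset.mem_range] at hj; congr 1 <;> omega
    _ ≤ (d+1) * ∑ j ∈ range (n+1), d.factorial * (sumLE d (n-j)).card := by
        apply Nat.mul_le_mul_left
        exact Finset.sum_le_sum fun j _ => ih (n-j)
    _ = (d+1).factorial * ∑ j ∈ range (n+1), (sumLE d (n-j)).card := by
        rw [← Finset.mul_sum, Nat.factorial_succ]; ring

lemma sumLE_upper (d n : ℕ) : d.factorial * (sumLE d n).card ≤ (n+d)^d := by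
  induction d generalizing n with
  | zero => simp [card_sumLE_zero]
  | succ d ih =>
    rw [card_sumLE_succ, Nat.factorial_succ, Finset.mul_sum]
    calc ∑ j ∈ range (n+1), (d+1) * d.factorial * (sumLE d (n-j)).card
        ≤ ∑ j ∈ range (n+1), (d+1) * ((n-j)+d)^d := by
          exact Finset.sum_le_sum fun j _ => by
            rw [Nat.mul_assoc]; exact Nat.mul_le_mul_left _ (ih (n-j))
    _ = (d+1) * ∑ j ∈ range (n+1), ((n-j)+d)^d := by rw [← Finset.mul_sum]
    _ = (d+1) * ∑ m ∈ range (n+1), (m+d)^d := by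
        congr 1
        rw [← Finset.sum_range_reflect]
        apply Finset.sum_congr rfl
        intro j hj; rw [Finset.mem_range] at hj; congr 2 <;> omega
    _ ≤ (d+1) * ∑ m ∈ range (n+d+1), m^d := by
        apply Nat.mul_le_mul_left
        calc ∑ m ∈ range (n+1), (m+d)^d = ∑ m ∈ Ico d (n+1+d), m^d := by
              rw [Finset.sum_Ico_eq_sum_range]
              apply Finset.sum_congr (by congr 1; omega)
              intro j _; congr 1; omega
        _ ≤ ∑ m ∈ range (n+d+1), m^d := by
              apply Finset.sum_le_sum_of_subset
              intro x hx
              rw [Finset.mem_Ico] at hx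
              rw [Finset.mem_range]
              omega
    _ ≤ (n+d+1)^(d+1) := P2 (n+d) d


lemma fiber_upper (w : ι → ℕ) (hw : ∀ i, 1 ≤ w i) (n : ℕ) :
    (wSumLE (fun _ : ι => 1) n).card ≤ (∏ i, w i) * (wSumLE w n).card := by
  have hone : ∀ i : ι, 1 ≤ (fun _ : ι => 1) i := fun _ => le_refl 1
  calc (wSumLE (fun _ : ι => 1) n).card
      ≤ (∏ i, w i) * ((wSumLE (fun _ : ι => 1) n).image (fun m i => m i / w i)).card := by
        apply Finset.card_le_mul_card_image
        intro b _
        have hcard : (Fintype.piFinset fun i => range (w i)).card = ∏ i, w i := by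
          rw [Fintype.card_piFinset]; simp
        rw [← hcard]
        apply Finset.card_le_card_of_injOn (fun m i => m i % w i)
        · intro m _
          rw [Finset.mem_coe, Fintype.mem_piFinset]
          intro i
          rw [Finset.mem_range]
          exact Nat.mod_lt _ (hw i)
        · intro m hm m' hm' hmm
          rw [Finset.mem_coe, Finset.mem_filter] at hm hm'
          funext i
          have h1 : m i / w i = m' i / w i :=
            (congrFun hm.2 i).trans (congrFun hm'.2 i).symm
          have h2 : m i % w i = m' i % w i := congrFun hmm i
          rw [← Nat.div_add_mod (m i) (w i), ← Nat.div_add_mod (m' i) (w i), h1, h2]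
    _ ≤ (∏ i, w i) * (wSumLE w n).card := by
        apply Nat.mul_le_mul_left
        apply Finset.card_le_card
        intro b hb
        rw [Finset.mem_image] at hb
        obtain ⟨m, hm, rfl⟩ := hb
        rw [mem_wSumLE hone] at hm
        simp only [one_mul] at hm
        rw [mem_wSumLE hw]
        calc ∑ i, w i * (m i / w i) ≤ ∑ i, m i := by
              apply Finset.sum_le_sum
              intro i _
              exact Nat.mul_div_le _ _
        _ ≤ n := hm

lemma fiber_lower (w : ι → ℕ) (hw : ∀ i, 1 ≤ w i) (n : ℕ) :
    (∏ i, w i) * (wSumLE w n).card ≤ (wSumLE (fun _ : ι => 1) (n + ∑ i, w i)).card := by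
  have hone : ∀ i : ι, 1 ≤ (fun _ : ι => 1) i := fun _ => le_refl 1
  have hcard : (Fintype.piFinset fun i => range (w i)).card = ∏ i, w i := by
    rw [Fintype.card_piFinset]; simp
  rw [← hcard, mul_comm, ← Finset.card_product]
  apply Finset.card_le_card_of_injOn (fun p i => w i * p.1 i + p.2 i)
  · intro p hp
    rw [Finset.mem_coe, Finset.mem_product] at hp
    obtain ⟨h1, h2⟩ := hp
    rw [mem_wSumLE hw] at h1
    rw [Fintype.mem_piFinset] at h2
    rw [Finset.mem_coe, mem_wSumLE hone]
    simp only [one_mul]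
    rw [Finset.sum_add_distrib]
    have : ∑ i, p.2 i ≤ ∑ i, w i := by
      apply Finset.sum_le_sum
      intro i _
      have := h2 i
      rw [Finset.mem_range] at this
      omega
    omega
  · intro p hp p' hp' hpp
    rw [Finset.mem_coe, Finset.mem_product] at hp hp'
    have h2 := hp.2
    have h2' := hp'.2
    rw [Fintype.mem_piFinset] at h2 h2'
    have key : ∀ i, p.1 i = p'.1 i ∧ p.2 i = p'.2 i := by
      intro i
      have hlt : p.2 i < w i := by have := h2 i; rwa [Finset.mem_range] at this
      have hlt' : p'.2 i < w i := by have := h2' i; rwa [Finset.mem_range] at this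
      have heq : w i * p.1 i + p.2 i = w i * p'.1 i + p'.2 i := congrFun hpp i
      have h0 : 0 < w i := hw i
      have d1 : (w i * p.1 i + p.2 i) / w i = p.1 i := by
        rw [Nat.mul_add_div h0, Nat.div_eq_of_lt hlt, Nat.add_zero]
      have d2 : (w i * p'.1 i + p'.2 i) / w i = p'.1 i := by
        rw [Nat.mul_add_div h0, Nat.div_eq_of_lt hlt', Nat.add_zero]
      have m1 : (w i * p.1 i + p.2 i) % w i = p.2 i := by
        rw [Nat.mul_add_mod, Nat.mod_eq_of_lt hlt]
      have m2 : (w i * p'.1 i + p'.2 i) % w i = p'.2 i := by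
        rw [Nat.mul_add_mod, Nat.mod_eq_of_lt hlt']
      constructor
      · rw [← d1, ← d2, heq]
      · rw [← m1, ← m2, heq]
    have e1 : p.1 = p'.1 := funext fun i => (key i).1
    have e2 : p.2 = p'.2 := funext fun i => (key i).2
    exact Prod.ext e1 e2

lemma card_wSumLE_comp_equiv {κ : Type*} [Fintype κ] [DecidableEq κ] (e : ι ≃ κ)
    (w : κ → ℕ) (hw : ∀ j, 1 ≤ w j) (n : ℕ) :
    (wSumLE (fun i => w (e i)) n).card = (wSumLE w n).card := by
  apply Finset.card_nbij' (i := fun f => f ∘ e.symm) (j := fun g => g ∘ e)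
  · intro f hf
    rw [Finset.mem_coe, mem_wSumLE (fun i => hw (e i))] at hf
    rw [Finset.mem_coe, mem_wSumLE hw]
    beta_reduce
    have : ∑ i, w (e i) * f i = ∑ j, w j * (f ∘ e.symm) j := by
      apply Fintype.sum_equiv e
      intro i
      simp
    omega
  · intro g hg
    rw [Finset.mem_coe, mem_wSumLE hw] at hg
    rw [Finset.mem_coe, mem_wSumLE (fun i => hw (e i))]
    have : ∑ i, w (e i) * (g ∘ e) (e.symm (e i)) = ∑ j, w j * g j := by
      apply Fintype.sum_equiv e
      intro i
      simp
    simp only [Function.comp] at this ⊢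
    calc ∑ i, w (e i) * g (e i) = ∑ j, w j * g j := by
          rw [← this]; apply Finset.sum_congr rfl; intros; simp
    _ ≤ n := hg
  · intro f _; funext i; simp
  · intro g _; funext j; simp

/-- Final general bounds for the weighted count. -/
lemma wSumLE_lower (w : ι → ℕ) (hw : ∀ i, 1 ≤ w i) (n : ℕ) :
    n ^ (Fintype.card ι) ≤
      (Fintype.card ι).factorial * (∏ i, w i) * (wSumLE w n).card := by
  classical
  set d := Fintype.card ι
  have e : ι ≃ Fin d := Fintype.equivFin ι
  have key : (wSumLE (fun _ : ι => 1) n).card = (sumLE d n).card := by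
    rw [sumLE]
    exact card_wSumLE_comp_equiv e (fun _ => 1) (fun _ => le_refl 1) n
  calc n ^ d ≤ d.factorial * (sumLE d n).card := sumLE_lower d n
  _ = d.factorial * (wSumLE (fun _ : ι => 1) n).card := by rw [key]
  _ ≤ d.factorial * ((∏ i, w i) * (wSumLE w n).card) :=
      Nat.mul_le_mul_left _ (fiber_upper w hw n)
  _ = d.factorial * (∏ i, w i) * (wSumLE w n).card := by ring

lemma wSumLE_upper (w : ι → ℕ) (hw : ∀ i, 1 ≤ w i) (n : ℕ) :
    (Fintype.card ι).factorial * (∏ i, w i) * (wSumLE w n).card ≤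
      (n + ∑ i, w i + Fintype.card ι) ^ (Fintype.card ι) := by
  classical
  set d := Fintype.card ι
  have e : ι ≃ Fin d := Fintype.equivFin ι
  have key : (wSumLE (fun _ : ι => 1) (n + ∑ i, w i)).card = (sumLE d (n + ∑ i, w i)).card := by
    rw [sumLE]
    exact card_wSumLE_comp_equiv e (fun _ => 1) (fun _ => le_refl 1) _
  calc d.factorial * (∏ i, w i) * (wSumLE w n).card
      = d.factorial * ((∏ i, w i) * (wSumLE w n).card) := by ring
  _ ≤ d.factorial * (wSumLE (fun _ : ι => 1) (n + ∑ i, w i)).card :=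
      Nat.mul_le_mul_left _ (fiber_lower w hw n)
  _ = d.factorial * (sumLE d (n + ∑ i, w i)).card := by rw [key]
  _ ≤ (n + ∑ i, w i + d) ^ d := sumLE_upper d _



/-! ### generic helpers -/

lemma rowLen_eq_of {μ : YoungDiagram} {i m : ℕ} (h : ∀ j, (i, j) ∈ μ ↔ j < m) :
    μ.rowLen i = m := by
  rcases lt_trichotomy (μ.rowLen i) m with hlt | he | hgt
  · have := (h (μ.rowLen i)).mpr hlt
    rw [YoungDiagram.mem_iff_lt_rowLen] at this
    omega
  · exact he
  · have := (h m).mp (YoungDiagram.mem_iff_lt_rowLen.mpr hgt)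
    omega

lemma colLen_eq_of {μ : YoungDiagram} {j m : ℕ} (h : ∀ i, (i, j) ∈ μ ↔ i < m) :
    μ.colLen j = m := by
  rcases lt_trichotomy (μ.colLen j) m with hlt | he | hgt
  · have := (h (μ.colLen j)).mpr hlt
    rw [YoungDiagram.mem_iff_lt_colLen] at this
    omega
  · exact he
  · have := (h m).mp (YoungDiagram.mem_iff_lt_colLen.mpr hgt)
    omega

/-- telescoping sum of truncated differences of an antitone function -/
lemma telescope {f : ℕ → ℕ} (hf : ∀ i, f (i+1) ≤ f i) (a b : ℕ) (hab : a ≤ b) :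
    ∑ i ∈ Ico a b, (f i - f (i+1)) = f a - f b := by
  induction b, hab using Nat.le_induction with
  | base => simp
  | succ b hab ih =>
    rw [Finset.sum_Ico_succ_top hab, ih]
    have h1 : f b ≤ f a := by
      clear ih
      induction b, hab using Nat.le_induction with
      | base => exact le_refl _
      | succ b hab ih => exact le_trans (hf b) ih
    have h2 := hf b
    omega

/-- double counting: `∑_{i ∈ [a,b)} ∑_{i' ∈ [i,b)} f i' = ∑_{i' ∈ [a,b)} (i'+1-a) * f i'` -/
lemma doubleCount (f : ℕ → ℕ) (a b : ℕ) :
    ∑ i ∈ Ico a b, ∑ i' ∈ Ico i b, f i' = ∑ i' ∈ Ico a b, (i' + 1 - a) * f i' := by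
  rw [Finset.sum_Ico_Ico_comm]
  apply Finset.sum_congr rfl
  intro j hj
  rw [Finset.mem_Ico] at hj
  rw [Finset.sum_const, Nat.card_Ico, smul_eq_mul]


/-! ### hook diagrams -/

lemma mem_hook_iff {k : ℕ} {μ : YoungDiagram} (hμ : μ.rowLen k ≤ k) (i j : ℕ) :
    (i, j) ∈ μ ↔ (i < k ∧ j < μ.rowLen i) ∨ (k ≤ i ∧ j < k ∧ i - k < μ.colLen j - k) := by
  by_cases hik : i < k
  · rw [YoungDiagram.mem_iff_lt_rowLen]
    constructor
    · intro h; exact Or.inl ⟨hik, h⟩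
    · rintro (⟨-, h⟩ | ⟨h, -⟩)
      · exact h
      · omega
  · rw [YoungDiagram.mem_iff_lt_colLen]
    constructor
    · intro h
      have hjk : j < k := by
        by_contra hjk
        have hkk : (k, k) ∈ μ := μ.up_left_mem (by omega) (by omega)
          (YoungDiagram.mem_iff_lt_colLen.mpr h)
        rw [YoungDiagram.mem_iff_lt_rowLen] at hkk
        omega
      exact Or.inr ⟨by omega, hjk, by omega⟩
    · rintro (⟨h, -⟩ | ⟨-, -, h⟩) <;> omega

lemma card_split {k : ℕ} {μ : YoungDiagram} (hμ : μ.rowLen k ≤ k) :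
    μ.card = ∑ i ∈ range k, μ.rowLen i + ∑ j ∈ range k, (μ.colLen j - k) := by
  have hsplit := Finset.card_filter_add_card_filter_not
    (s := μ.cells) (p := fun c => c.1 < k)
  have hT1 : μ.cells.filter (fun c => c.1 < k) = (range k).biUnion (fun i => μ.row i) := by
    ext c
    simp only [Finset.mem_filter, Finset.mem_biUnion, Finset.mem_range,
      YoungDiagram.mem_row_iff, YoungDiagram.mem_cells]
    constructor
    · rintro ⟨h1, h2⟩; exact ⟨c.1, h2, h1, rfl⟩
    · rintro ⟨i, hi, h1, rfl⟩; exact ⟨h1, hi⟩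
  have hT2 : μ.cells.filter (fun c => ¬ c.1 < k) =
      (range k).biUnion (fun j => Ico k (μ.colLen j) ×ˢ {j}) := by
    ext c
    simp only [Finset.mem_filter, Finset.mem_biUnion, Finset.mem_range, Finset.mem_product,
      Finset.mem_Ico, Finset.mem_singleton, YoungDiagram.mem_cells]
    constructor
    · rintro ⟨h1, h2⟩
      have hm := (mem_hook_iff hμ c.1 c.2).mp (by rwa [Prod.mk.eta])
      rcases hm with ⟨h, -⟩ | ⟨h3, h4, h5⟩
      · omega
      · refine ⟨c.2, h4, ⟨⟨h3, ?_⟩, rfl⟩⟩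
        have : (c.1, c.2) ∈ μ := by rwa [Prod.mk.eta]
        rw [YoungDiagram.mem_iff_lt_colLen] at this
        exact this
    · rintro ⟨j, hj, ⟨⟨h1, h2⟩, rfl⟩⟩
      constructor
      · rw [← Prod.mk.eta (p := c), YoungDiagram.mem_iff_lt_colLen]
        exact h2
      · omega
  have c1 : (μ.cells.filter (fun c => c.1 < k)).card = ∑ i ∈ range k, μ.rowLen i := by
    rw [hT1, Finset.card_biUnion]
    · exact Finset.sum_congr rfl fun i _ => (μ.rowLen_eq_card).symm
    · intro i _ i' _ hii'
      simp only [Finset.disjoint_left, YoungDiagram.mem_row_iff]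
      rintro c ⟨-, h1⟩ ⟨-, h2⟩
      exact hii' (h1 ▸ h2 ▸ rfl)
  have c2 : (μ.cells.filter (fun c => ¬ c.1 < k)).card = ∑ j ∈ range k, (μ.colLen j - k) := by
    rw [hT2, Finset.card_biUnion]
    · apply Finset.sum_congr rfl
      intro j _
      rw [Finset.card_product, Nat.card_Ico, Finset.card_singleton, Nat.mul_one]
    · intro j _ j' _ hjj'
      simp only [Finset.disjoint_left, Finset.mem_product, Finset.mem_singleton]
      rintro c ⟨-, h1⟩ ⟨-, h2⟩
      exact hjj' (h1 ▸ h2 ▸ rfl)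
  rw [YoungDiagram.card, ← hsplit, c1, c2]


/-! ### decode data -/

variable (k : ℕ)

def Rt (μ : YoungDiagram) (i : ℕ) : ℕ := if i < k then μ.rowLen i else 0
def Ct (μ : YoungDiagram) (j : ℕ) : ℕ := if j < k then μ.colLen j - k else 0
def yD (μ : YoungDiagram) (i : ℕ) : ℕ := Rt k μ i - Rt k μ (i+1)
def zD (μ : YoungDiagram) (j : ℕ) : ℕ := Ct k μ j - Ct k μ (j+1)

lemma Rt_anti (μ : YoungDiagram) (i : ℕ) : Rt k μ (i+1) ≤ Rt k μ i := by
  unfold Rt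
  by_cases h1 : i + 1 < k
  · rw [if_pos h1, if_pos (by omega)]
    exact μ.rowLen_anti i (i+1) (by omega)
  · rw [if_neg h1]
    exact Nat.zero_le _

lemma Ct_anti (μ : YoungDiagram) (j : ℕ) : Ct k μ (j+1) ≤ Ct k μ j := by
  unfold Ct
  by_cases h1 : j + 1 < k
  · rw [if_pos h1, if_pos (by omega)]
    exact Nat.sub_le_sub_right (μ.colLen_anti j (j+1) (by omega)) k
  · rw [if_neg h1]
    exact Nat.zero_le _

lemma Rt_eq_sum (μ : YoungDiagram) {i : ℕ} (hik : i ≤ k) :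
    Rt k μ i = ∑ i' ∈ Ico i k, yD k μ i' := by
  unfold yD
  rw [telescope (Rt_anti k μ) i k hik]
  simp [Rt]

lemma Ct_eq_sum (μ : YoungDiagram) {j : ℕ} (hjk : j ≤ k) :
    Ct k μ j = ∑ j' ∈ Ico j k, zD k μ j' := by
  unfold zD
  rw [telescope (Ct_anti k μ) j k hjk]
  simp [Ct]

lemma sum_Rt (μ : YoungDiagram) :
    ∑ i ∈ range k, μ.rowLen i = ∑ i ∈ range k, (i+1) * yD k μ i := by
  have h1 : ∑ i ∈ range k, μ.rowLen i = ∑ i ∈ range k, Rt k μ i := by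
    apply Finset.sum_congr rfl
    intro i hi
    rw [Finset.mem_range] at hi
    rw [Rt, if_pos hi]
  rw [h1, Finset.range_eq_Ico]
  have h2 : ∑ i ∈ Ico 0 k, Rt k μ i = ∑ i ∈ Ico 0 k, ∑ i' ∈ Ico i k, yD k μ i' := by
    apply Finset.sum_congr rfl
    intro i hi
    rw [Finset.mem_Ico] at hi
    exact Rt_eq_sum k μ (by omega)
  rw [h2, doubleCount]
  simp

lemma sum_Ct (μ : YoungDiagram) :
    ∑ j ∈ range k, (μ.colLen j - k) = ∑ j ∈ range k, (j+1) * zD k μ j := by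
  have h1 : ∑ j ∈ range k, (μ.colLen j - k) = ∑ j ∈ range k, Ct k μ j := by
    apply Finset.sum_congr rfl
    intro j hj
    rw [Finset.mem_range] at hj
    rw [Ct, if_pos hj]
  rw [h1, Finset.range_eq_Ico]
  have h2 : ∑ j ∈ Ico 0 k, Ct k μ j = ∑ j ∈ Ico 0 k, ∑ j' ∈ Ico j k, zD k μ j' := by
    apply Finset.sum_congr rfl
    intro j hj
    rw [Finset.mem_Ico] at hj
    exact Ct_eq_sum k μ (by omega)
  rw [h2, doubleCount]
  simp

lemma card_ident (hk : 1 ≤ k) {μ : YoungDiagram} (hμ : μ.rowLen k ≤ k) :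
    μ.card = yD k μ 0 +
      ((∑ m ∈ range (k-1), (m+2) * yD k μ (m+1)) + ∑ j ∈ range k, (j+1) * zD k μ j) := by
  rw [card_split hμ, sum_Rt, sum_Ct]
  have h1 : ∑ i ∈ range k, (i+1) * yD k μ i
      = 1 * yD k μ 0 + ∑ i ∈ Ico 1 k, (i+1) * yD k μ i := by
    rw [Finset.range_eq_Ico]
    exact Finset.sum_eq_sum_Ico_succ_bot hk _
  have h2 : ∑ i ∈ Ico 1 k, (i+1) * yD k μ i
      = ∑ m ∈ range (k-1), (m+2) * yD k μ (m+1) := by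
    rw [Finset.sum_Ico_eq_sum_range]
    apply Finset.sum_congr rfl
    intro m _
    have h : 1 + m = m + 1 := by omega
    rw [h]
  rw [h1, h2]
  omega


/-! ### weights and decoding -/

def wt : Fin (k-1) ⊕ Fin k → ℕ := Sum.elim (fun i => (i:ℕ)+2) (fun j => (j:ℕ)+1)

def dec (μ : YoungDiagram) : Fin (k-1) ⊕ Fin k → ℕ :=
  Sum.elim (fun m => yD k μ ((m:ℕ)+1)) (fun j => zD k μ (j:ℕ))

lemma wt_pos : ∀ x, 1 ≤ wt k x := by
  rintro (i | j) <;> simp [wt]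

lemma sum_wt_dec (μ : YoungDiagram) :
    ∑ x, wt k x * dec k μ x =
      (∑ m ∈ range (k-1), (m+2) * yD k μ (m+1)) + ∑ j ∈ range k, (j+1) * zD k μ j := by
  rw [Fintype.sum_sum_type]
  congr 1
  · rw [← Fin.sum_univ_eq_sum_range (fun m => (m+2) * yD k μ (m+1)) (k-1)]
    apply Finset.sum_congr rfl
    intro m _
    simp [wt, dec]
  · rw [← Fin.sum_univ_eq_sum_range (fun j => (j+1) * zD k μ j) k]
    apply Finset.sum_congr rfl
    intro j _
    simp [wt, dec]

lemma mem_iff_RtCt {μ : YoungDiagram} (hμ : μ.rowLen k ≤ k) (i j : ℕ) :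
    (i, j) ∈ μ ↔ (i < k ∧ j < Rt k μ i) ∨ (k ≤ i ∧ j < k ∧ i - k < Ct k μ j) := by
  rw [mem_hook_iff hμ]
  constructor
  · rintro (⟨h1, h2⟩ | ⟨h1, h2, h3⟩)
    · exact Or.inl ⟨h1, by rwa [Rt, if_pos h1]⟩
    · exact Or.inr ⟨h1, h2, by rwa [Ct, if_pos h2]⟩
  · rintro (⟨h1, h2⟩ | ⟨h1, h2, h3⟩)
    · exact Or.inl ⟨h1, by rwa [Rt, if_pos h1] at h2⟩
    · exact Or.inr ⟨h1, h2, by rwa [Ct, if_pos h2] at h3⟩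

lemma dec_sum_le (hk : 1 ≤ k) {n : ℕ} {μ : YoungDiagram}
    (hcard : μ.card = n) (hμ : μ.rowLen k ≤ k) :
    ∑ x, wt k x * dec k μ x ≤ n := by
  rw [sum_wt_dec]
  have := card_ident k hk hμ
  omega

lemma dec_inj (hk : 1 ≤ k) {n : ℕ} {μ μ' : YoungDiagram}
    (hcard : μ.card = n) (hμ : μ.rowLen k ≤ k)
    (hcard' : μ'.card = n) (hμ' : μ'.rowLen k ≤ k)
    (hdec : dec k μ = dec k μ') : μ = μ' := by
  have hyD : ∀ i, 1 ≤ i → i < k → yD k μ i = yD k μ' i := by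
    intro i h1 h2
    have hm : i - 1 < k - 1 := by omega
    have := congrFun hdec (Sum.inl ⟨i-1, hm⟩)
    simp only [dec, Sum.elim_inl] at this
    have he : i - 1 + 1 = i := by omega
    rwa [he] at this
  have hzD : ∀ j, j < k → zD k μ j = zD k μ' j := by
    intro j hj
    have := congrFun hdec (Sum.inr ⟨j, hj⟩)
    simpa only [dec, Sum.elim_inr] using this
  have hRt : ∀ i, 1 ≤ i → Rt k μ i = Rt k μ' i := by
    intro i h1
    by_cases hik : i ≤ k
    · rw [Rt_eq_sum k μ hik, Rt_eq_sum k μ' hik]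
      apply Finset.sum_congr rfl
      intro i' hi'
      rw [Finset.mem_Ico] at hi'
      exact hyD i' (by omega) (by omega)
    · rw [Rt, Rt, if_neg (by omega), if_neg (by omega)]
  have hCt : ∀ j, Ct k μ j = Ct k μ' j := by
    intro j
    by_cases hjk : j ≤ k
    · rw [Ct_eq_sum k μ hjk, Ct_eq_sum k μ' hjk]
      apply Finset.sum_congr rfl
      intro j' hj'
      rw [Finset.mem_Ico] at hj'
      exact hzD j' (by omega)
    · rw [Ct, Ct, if_neg (by omega), if_neg (by omega)]
  have hy0 : yD k μ 0 = yD k μ' 0 := by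
    have e1 := card_ident k hk hμ
    have e2 := card_ident k hk hμ'
    rw [hcard] at e1
    rw [hcard'] at e2
    have s1 : ∑ m ∈ range (k-1), (m+2) * yD k μ (m+1)
        = ∑ m ∈ range (k-1), (m+2) * yD k μ' (m+1) := by
      apply Finset.sum_congr rfl
      intro m hm
      rw [Finset.mem_range] at hm
      rw [hyD (m+1) (by omega) (by omega)]
    have s2 : ∑ j ∈ range k, (j+1) * zD k μ j = ∑ j ∈ range k, (j+1) * zD k μ' j := by
      apply Finset.sum_congr rfl
      intro j hj
      rw [Finset.mem_range] at hj
      rw [hzD j (by omega)]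
    omega
  have hRt0 : ∀ i, Rt k μ i = Rt k μ' i := by
    intro i
    rcases Nat.eq_zero_or_pos i with rfl | hi
    · have a1 : Rt k μ 0 = yD k μ 0 + Rt k μ 1 := by
        have h : Rt k μ 1 ≤ Rt k μ 0 := Rt_anti k μ 0
        have h2 : yD k μ 0 = Rt k μ 0 - Rt k μ 1 := rfl
        omega
      have a2 : Rt k μ' 0 = yD k μ' 0 + Rt k μ' 1 := by
        have h : Rt k μ' 1 ≤ Rt k μ' 0 := Rt_anti k μ' 0
        have h2 : yD k μ' 0 = Rt k μ' 0 - Rt k μ' 1 := rfl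
        omega
      rw [a1, a2, hy0, hRt 1 le_rfl]
    · exact hRt i hi
  apply YoungDiagram.ext
  ext c
  rw [YoungDiagram.mem_cells, YoungDiagram.mem_cells, ← Prod.mk.eta (p := c),
    mem_iff_RtCt k hμ, mem_iff_RtCt k hμ', hRt0, hCt]


/-! ### encoding: building a hook diagram from data -/

def vL (v : Fin (k-1) ⊕ Fin k → ℕ) : ℕ → ℕ :=
  fun m => if h : m < k-1 then v (Sum.inl ⟨m, h⟩) else 0

def vR (v : Fin (k-1) ⊕ Fin k → ℕ) : ℕ → ℕ :=
  fun j => if h : j < k then v (Sum.inr ⟨j, h⟩) else 0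

lemma sum_wt_eq (v : Fin (k-1) ⊕ Fin k → ℕ) :
    ∑ x, wt k x * v x =
      (∑ m ∈ range (k-1), (m+2) * vL k v m) + ∑ j ∈ range k, (j+1) * vR k v j := by
  rw [Fintype.sum_sum_type]
  congr 1
  · rw [← Fin.sum_univ_eq_sum_range (fun m => (m+2) * vL k v m) (k-1)]
    apply Finset.sum_congr rfl
    intro m _
    simp [wt, vL]
  · rw [← Fin.sum_univ_eq_sum_range (fun j => (j+1) * vR k v j) k]
    apply Finset.sum_congr rfl
    intro j _
    simp [wt, vR]

/-- the row increments -/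
def yE (n : ℕ) (v : Fin (k-1) ⊕ Fin k → ℕ) : ℕ → ℕ :=
  fun i => (if i = 0 then n - k*k - ∑ x, wt k x * v x else 0) +
    (if i = k-1 then k else 0) + (if 1 ≤ i then vL k v (i-1) else 0)

/-- the first `k` row lengths -/
def rE (n : ℕ) (v : Fin (k-1) ⊕ Fin k → ℕ) : ℕ → ℕ :=
  fun i => ∑ i' ∈ Ico i k, yE k n v i'

/-- the column excess lengths -/
def cE (v : Fin (k-1) ⊕ Fin k → ℕ) : ℕ → ℕ :=
  fun j => ∑ j' ∈ Ico j k, vR k v j'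

lemma rE_anti (n : ℕ) (v : Fin (k-1) ⊕ Fin k → ℕ) {i i' : ℕ} (h : i ≤ i') :
    rE k n v i' ≤ rE k n v i :=
  Finset.sum_le_sum_of_subset (Finset.Ico_subset_Ico h le_rfl)

lemma cE_anti (v : Fin (k-1) ⊕ Fin k → ℕ) {j j' : ℕ} (h : j ≤ j') :
    cE k v j' ≤ cE k v j :=
  Finset.sum_le_sum_of_subset (Finset.Ico_subset_Ico h le_rfl)

lemma rE_ge (n : ℕ) (v : Fin (k-1) ⊕ Fin k → ℕ) {i : ℕ} (hi : i < k) :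
    k ≤ rE k n v i := by
  have h1 : k - 1 ∈ Ico i k := by rw [Finset.mem_Ico]; omega
  have h2 : k ≤ yE k n v (k-1) := by
    unfold yE
    rw [if_pos rfl]
    omega
  calc k ≤ yE k n v (k-1) := h2
  _ ≤ ∑ i' ∈ Ico i k, yE k n v i' := Finset.single_le_sum (fun _ _ => Nat.zero_le _) h1

/-- the constructed Young diagram -/
def enc (n : ℕ) (v : Fin (k-1) ⊕ Fin k → ℕ) : YoungDiagram where
  cells := (range k).biUnion (fun i => {i} ×ˢ range (rE k n v i)) ∪
           (range k).biUnion (fun j => Ico k (k + cE k v j) ×ˢ {j})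
  isLowerSet := by
    intro c2 c1 hle hc2
    rw [Finset.mem_coe] at hc2 ⊢
    obtain ⟨i1, j1⟩ := c1
    obtain ⟨i2, j2⟩ := c2
    rw [Prod.mk_le_mk] at hle
    obtain ⟨hi, hj⟩ := hle
    simp only [Finset.mem_union, Finset.mem_biUnion, Finset.mem_range, Finset.mem_product,
      Finset.mem_singleton, Finset.mem_Ico] at hc2 ⊢
    rcases hc2 with ⟨i, hik, hii, hjr⟩ | ⟨j, hjk, ⟨hki, hic⟩, hjj⟩
    · obtain rfl : i2 = i := hii
      left
      refine ⟨i1, by omega, rfl, ?_⟩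
      calc j1 ≤ j2 := hj
      _ < rE k n v i2 := hjr
      _ ≤ rE k n v i1 := rE_anti k n v hi
    · obtain rfl : j2 = j := hjj
      by_cases hi1 : i1 < k
      · left
        refine ⟨i1, hi1, rfl, ?_⟩
        calc j1 ≤ j2 := hj
        _ < k := hjk
        _ ≤ rE k n v i1 := rE_ge k n v hi1
      · right
        refine ⟨j1, by omega, ⟨⟨by omega, ?_⟩, rfl⟩⟩
        calc i1 ≤ i2 := hi
        _ < k + cE k v j2 := hic
        _ ≤ k + cE k v j1 := by
            have := cE_anti k v hj
            omega

lemma mem_enc (n : ℕ) (v : Fin (k-1) ⊕ Fin k → ℕ) (i j : ℕ) :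
    (i, j) ∈ enc k n v ↔
      (i < k ∧ j < rE k n v i) ∨ (j < k ∧ k ≤ i ∧ i < k + cE k v j) := by
  show (i, j) ∈ (enc k n v).cells ↔ _
  rw [enc]
  simp only [Finset.mem_union, Finset.mem_biUnion, Finset.mem_range, Finset.mem_product,
    Finset.mem_singleton, Finset.mem_Ico]
  constructor
  · rintro (⟨i', hik, rfl, hjr⟩ | ⟨j', hjk, ⟨⟨hki, hic⟩, rfl⟩⟩)
    · exact Or.inl ⟨hik, hjr⟩
    · exact Or.inr ⟨hjk, hki, hic⟩
  · rintro (⟨h1, h2⟩ | ⟨h1, h2, h3⟩)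
    · exact Or.inl ⟨i, h1, rfl, h2⟩
    · exact Or.inr ⟨j, h1, ⟨⟨h2, h3⟩, rfl⟩⟩

lemma rowLen_enc (n : ℕ) (v : Fin (k-1) ⊕ Fin k → ℕ) {i : ℕ} (hi : i < k) :
    (enc k n v).rowLen i = rE k n v i := by
  apply rowLen_eq_of
  intro j
  rw [mem_enc]
  constructor
  · rintro (⟨-, h⟩ | ⟨-, h, -⟩)
    · exact h
    · omega
  · intro h
    exact Or.inl ⟨hi, h⟩

lemma colLen_enc (n : ℕ) (v : Fin (k-1) ⊕ Fin k → ℕ) {j : ℕ} (hj : j < k) :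
    (enc k n v).colLen j = k + cE k v j := by
  apply colLen_eq_of
  intro i
  rw [mem_enc]
  constructor
  · rintro (⟨h, -⟩ | ⟨-, -, h⟩) <;> omega
  · intro h
    by_cases hik : i < k
    · exact Or.inl ⟨hik, lt_of_lt_of_le hj (rE_ge k n v hik)⟩
    · exact Or.inr ⟨hj, by omega, h⟩

lemma rowLenk_enc (n : ℕ) (v : Fin (k-1) ⊕ Fin k → ℕ) :
    (enc k n v).rowLen k ≤ k := by
  by_contra h
  have : (k, k) ∈ enc k n v := YoungDiagram.mem_iff_lt_rowLen.mpr (by omega)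
  rw [mem_enc] at this
  omega

lemma card_enc (hk : 1 ≤ k) (n : ℕ) (v : Fin (k-1) ⊕ Fin k → ℕ)
    (hs : k*k + ∑ x, wt k x * v x ≤ n) : (enc k n v).card = n := by
  rw [card_split (rowLenk_enc k n v)]
  have h1 : ∑ i ∈ range k, (enc k n v).rowLen i = ∑ i ∈ range k, rE k n v i := by
    apply Finset.sum_congr rfl
    intro i hi
    rw [Finset.mem_range] at hi
    exact rowLen_enc k n v hi
  have h2 : ∑ j ∈ range k, ((enc k n v).colLen j - k) = ∑ j ∈ range k, cE k v j := by
    apply Finset.sum_congr rfl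
    intro j hj
    rw [Finset.mem_range] at hj
    rw [colLen_enc k n v hj]
    omega
  rw [h1, h2]
  have h3 : ∑ i ∈ range k, rE k n v i = ∑ i ∈ range k, (i+1) * yE k n v i := by
    rw [Finset.range_eq_Ico]
    unfold rE
    rw [doubleCount]
    simp
  have h4 : ∑ j ∈ range k, cE k v j = ∑ j ∈ range k, (j+1) * vR k v j := by
    rw [Finset.range_eq_Ico]
    unfold cE
    rw [doubleCount]
    simp
  rw [h3, h4]
  have h5 : ∑ i ∈ range k, (i+1) * yE k n v i =
      (n - k*k - ∑ x, wt k x * v x) + k*k + ∑ m ∈ range (k-1), (m+2) * vL k v m := by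
    unfold yE
    have expand : ∀ i : ℕ, (i+1) * ((if i = 0 then n - k*k - ∑ x, wt k x * v x else 0) +
        (if i = k-1 then k else 0) + (if 1 ≤ i then vL k v (i-1) else 0)) =
        (if i = 0 then n - k*k - ∑ x, wt k x * v x else 0) +
        (if i = k-1 then k*k else 0) + (if 1 ≤ i then (i+1) * vL k v (i-1) else 0) := by
      intro i
      have hkk : k - 1 + 1 = k := by omega
      by_cases h0 : i = 0 <;> by_cases h1 : i = k - 1
      · subst h0
        have hk1' : k = 1 := by omega
        subst hk1'
        simp
      · subst h0
        simp [h1]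
      · subst h1
        have hge : 1 ≤ k - 1 := by omega
        simp only [if_neg h0, if_pos rfl, if_pos hge, if_true]
        rw [hkk]
        ring
      · simp only [if_neg h0, if_neg h1]
        by_cases h2 : 1 ≤ i
        · simp only [if_pos h2]
          ring
        · simp only [if_neg h2]
          ring
    rw [Finset.sum_congr rfl (fun i _ => expand i)]
    rw [Finset.sum_add_distrib, Finset.sum_add_distrib]
    congr 1
    · congr 1
      · rw [Finset.sum_ite_eq' (range k) 0 (fun _ => n - k*k - ∑ x, wt k x * v x)]
        rw [if_pos (Finset.mem_range.mpr (by omega))]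
      · rw [Finset.sum_ite_eq' (range k) (k-1) (fun _ => k*k)]
        rw [if_pos (Finset.mem_range.mpr (by omega))]
    · rw [Finset.range_eq_Ico, Finset.sum_eq_sum_Ico_succ_bot hk]
      rw [if_neg (by omega), Finset.sum_Ico_eq_sum_range, Nat.zero_add]
      apply Finset.sum_congr (by congr 1 <;> omega)
      intro m _
      rw [if_pos (by omega)]
      have e2 : 0 + 1 + m - 1 = m := by omega
      have e1 : 0 + 1 + m + 1 = m + 2 := by omega
      rw [e2, e1]
  rw [h5, sum_wt_eq]
  have hle : ∑ x, wt k x * v x =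
      (∑ m ∈ range (k-1), (m+2) * vL k v m) + ∑ j ∈ range k, (j+1) * vR k v j :=
    sum_wt_eq k v
  omega


lemma enc_inj (hk : 1 ≤ k) (n : ℕ) {v v' : Fin (k-1) ⊕ Fin k → ℕ}
    (h : enc k n v = enc k n v') : v = v' := by
  have hrE : ∀ i, i < k → rE k n v i = rE k n v' i := by
    intro i hi
    rw [← rowLen_enc k n v hi, ← rowLen_enc k n v' hi, h]
  have hcE : ∀ j, cE k v j = cE k v' j := by
    intro j
    by_cases hj : j < k
    · have a1 := colLen_enc k n v hj
      have a2 := colLen_enc k n v' hj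
      rw [h] at a1
      omega
    · unfold cE
      rw [Finset.Ico_eq_empty (by omega)]
      simp
  have hvR : ∀ j, j < k → vR k v j = vR k v' j := by
    intro j hj
    have a1 : cE k v j = vR k v j + cE k v (j+1) := by
      unfold cE
      exact Finset.sum_eq_sum_Ico_succ_bot hj _
    have a2 : cE k v' j = vR k v' j + cE k v' (j+1) := by
      unfold cE
      exact Finset.sum_eq_sum_Ico_succ_bot hj _
    have b1 := hcE j
    have b2 := hcE (j+1)
    omega
  have hyE : ∀ i, 1 ≤ i → i < k → yE k n v i = yE k n v' i := by
    intro i h1 h2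
    have a1 : rE k n v i = yE k n v i + rE k n v (i+1) := by
      unfold rE
      exact Finset.sum_eq_sum_Ico_succ_bot h2 _
    have a2 : rE k n v' i = yE k n v' i + rE k n v' (i+1) := by
      unfold rE
      exact Finset.sum_eq_sum_Ico_succ_bot h2 _
    have h3 : rE k n v (i+1) = rE k n v' (i+1) := by
      by_cases hik : i+1 < k
      · exact hrE _ hik
      · unfold rE
        rw [Finset.Ico_eq_empty (by omega)]
        simp
    have h4 := hrE i h2
    omega
  have key : ∀ (w : Fin (k-1) ⊕ Fin k → ℕ) (m : ℕ), m < k - 1 →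
      yE k n w (m+1) = (if m+1 = k-1 then k else 0) + vL k w m := by
    intro w m hm
    unfold yE
    rw [if_neg (show ¬(m+1 = 0) by omega), if_pos (show 1 ≤ m+1 by omega),
      Nat.add_sub_cancel]
    omega
  have hvL : ∀ m, m < k-1 → vL k v m = vL k v' m := by
    intro m hm
    have h5 := hyE (m+1) (by omega) (by omega)
    rw [key v m hm, key v' m hm] at h5
    omega
  funext x
  rcases x with m | j
  · have h6 := hvL m.val m.isLt
    unfold vL at h6
    rw [dif_pos m.isLt, dif_pos m.isLt] at h6
    simpa using h6
  · have h6 := hvR j.val j.isLt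
    unfold vR at h6
    rw [dif_pos j.isLt, dif_pos j.isLt] at h6
    simpa using h6


/-! ### the sandwich -/

lemma hook_upper (hk : 1 ≤ k) (n : ℕ) :
    (hook k k n).Finite ∧ (hook k k n).ncard ≤ (wSumLE (wt k) n).card := by
  have hinj : Set.InjOn (dec k) (hook k k n) := fun μ hμ μ' hμ' hd =>
    dec_inj k hk hμ.1 hμ.2 hμ'.1 hμ'.2 hd
  have himg : dec k '' (hook k k n) ⊆ ↑(wSumLE (wt k) n) := by
    rintro _ ⟨μ, hμ, rfl⟩
    rw [Finset.mem_coe, mem_wSumLE (wt_pos k)]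
    exact dec_sum_le k hk hμ.1 hμ.2
  have hfin : (hook k k n).Finite := Set.Finite.of_finite_image
    (Set.Finite.subset (wSumLE (wt k) n).finite_toSet himg) hinj
  refine ⟨hfin, ?_⟩
  calc (hook k k n).ncard = (dec k '' hook k k n).ncard :=
        (Set.ncard_image_of_injOn hinj).symm
  _ ≤ ((wSumLE (wt k) n : Finset _) : Set _).ncard :=
        Set.ncard_le_ncard himg (wSumLE _ n).finite_toSet
  _ = (wSumLE (wt k) n).card := Set.ncard_coe_finset _

lemma hook_lower (hk : 1 ≤ k) {n : ℕ} (hn : k*k ≤ n) :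
    (wSumLE (wt k) (n - k*k)).card ≤ (hook k k n).ncard := by
  have hmaps : ∀ v ∈ wSumLE (wt k) (n - k*k), enc k n v ∈ hook k k n := by
    intro v hv
    rw [mem_wSumLE (wt_pos k)] at hv
    exact ⟨card_enc k hk n v (by omega), rowLenk_enc k n v⟩
  have hinj : Set.InjOn (enc k n) ↑(wSumLE (wt k) (n - k*k)) :=
    fun v _ v' _ h => enc_inj k hk n h
  rw [← Set.ncard_coe_finset (wSumLE (wt k) (n - k*k)), ← Set.ncard_image_of_injOn hinj]
  apply Set.ncard_le_ncard ?_ (hook_upper k hk n).1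
  rintro _ ⟨v, hv, rfl⟩
  exact hmaps v (Finset.mem_coe.mp hv)

lemma prod_range_add_two (M : ℕ) : ∏ m ∈ range M, (m+2) = (M+1).factorial := by
  induction M with
  | zero => simp
  | succ M ih =>
    rw [Finset.prod_range_succ, ih, Nat.factorial_succ (M+1)]
    ring

lemma prod_wt (hk : 1 ≤ k) : ∏ x, wt k x = k.factorial * k.factorial := by
  rw [Fintype.prod_sum_type]
  have h1 : ∏ i : Fin (k-1), wt k (Sum.inl i) = k.factorial := by
    have : ∀ i : Fin (k-1), wt k (Sum.inl i) = (i:ℕ) + 2 := fun i => rfl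
    rw [Fintype.prod_congr _ _ this, Fin.prod_univ_eq_prod_range (fun m => m + 2) (k-1),
      prod_range_add_two]
    congr 1
    omega
  have h2 : ∏ j : Fin k, wt k (Sum.inr j) = k.factorial := by
    have : ∀ j : Fin k, wt k (Sum.inr j) = (j:ℕ) + 1 := fun j => rfl
    rw [Fintype.prod_congr _ _ this, Fin.prod_univ_eq_prod_range (fun m => m + 1) k,
      Finset.prod_range_add_one_eq_factorial]
  rw [h1, h2]

lemma card_idx (hk : 1 ≤ k) : Fintype.card (Fin (k-1) ⊕ Fin k) = 2*k-1 := by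
  rw [Fintype.card_sum, Fintype.card_fin, Fintype.card_fin]
  omega

/-- the natural-number sandwich -/
lemma hook_sandwich (hk : 1 ≤ k) {n : ℕ} (hn : k*k ≤ n) :
    (n - k*k)^(2*k-1) ≤
        (2*k-1).factorial * (k.factorial * k.factorial) * (hook k k n).ncard ∧
      (2*k-1).factorial * (k.factorial * k.factorial) * (hook k k n).ncard ≤
        (n + ((∑ x, wt k x) + (2*k-1)))^(2*k-1) := by
  have hc := card_idx k hk
  have hp := prod_wt k hk
  constructor
  · have h1 := wSumLE_lower (wt k) (wt_pos k) (n - k*k)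
    rw [hc, hp] at h1
    calc (n - k*k)^(2*k-1)
        ≤ (2*k-1).factorial * (k.factorial * k.factorial) * (wSumLE (wt k) (n-k*k)).card := h1
    _ ≤ (2*k-1).factorial * (k.factorial * k.factorial) * (hook k k n).ncard :=
        Nat.mul_le_mul_left _ (hook_lower k hk hn)
  · have h2 := wSumLE_upper (wt k) (wt_pos k) n
    rw [hc, hp] at h2
    calc (2*k-1).factorial * (k.factorial * k.factorial) * (hook k k n).ncard
        ≤ (2*k-1).factorial * (k.factorial * k.factorial) * (wSumLE (wt k) n).card :=
        Nat.mul_le_mul_left _ (hook_upper k hk n).2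
    _ ≤ (n + ∑ x, wt k x + (2*k-1))^(2*k-1) := h2
    _ = (n + ((∑ x, wt k x) + (2*k-1)))^(2*k-1) := by rw [Nat.add_assoc]

end Stmt19

open Filter Stmt19 in
/-- Fix an integer `k ≥ 1`.  Then
`|H(k,k;n)| · k!·k!·(2k−1)! / n^{2k−1} → 1` as `n → ∞`; that is, the number of partitions
of `n` in the `(k,k)`-hook is asymptotically `n^{2k−1} / (k!·k!·(2k−1)!)`. -/
theorem stmt19 (k : ℕ) (hk : 1 ≤ k) :
    Filter.Tendsto
      (fun n : ℕ =>
        ((hook k k n).ncard : ℝ) *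
            ((Nat.factorial k : ℝ) * (Nat.factorial k : ℝ) *
              (Nat.factorial (2 * k - 1) : ℝ)) /
          (n : ℝ) ^ (2 * k - 1))
      Filter.atTop (nhds 1) := by
  classical
  set C : ℕ := (∑ x, Stmt19.wt k x) + (2*k-1) with hC
  have limL : Tendsto (fun n : ℕ => (1 - ((k*k : ℕ):ℝ)/n)^(2*k-1)) atTop (nhds 1) := by
    have h0 : Tendsto (fun n : ℕ => ((k*k:ℕ):ℝ)/n) atTop (nhds 0) :=
      tendsto_const_div_atTop_nhds_zero_nat _
    have h1 := (tendsto_const_nhds (x := (1:ℝ)) (f := atTop (α := ℕ))).sub h0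
    have h2 := h1.pow (2*k-1)
    simpa using h2
  have limU : Tendsto (fun n : ℕ => (1 + ((C:ℕ):ℝ)/n)^(2*k-1)) atTop (nhds 1) := by
    have h0 : Tendsto (fun n : ℕ => ((C:ℕ):ℝ)/n) atTop (nhds 0) :=
      tendsto_const_div_atTop_nhds_zero_nat _
    have h1 := (tendsto_const_nhds (x := (1:ℝ)) (f := atTop (α := ℕ))).add h0
    have h2 := h1.pow (2*k-1)
    simpa using h2
  apply tendsto_of_tendsto_of_tendsto_of_le_of_le' limL limU
  · filter_upwards [eventually_ge_atTop (k*k+1)] with n hn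
    have hcn : k*k ≤ n := by omega
    have hnpos : (0:ℝ) < (n:ℝ) := by
      have : 1 ≤ n := by omega
      exact_mod_cast Nat.lt_of_lt_of_le Nat.zero_lt_one this
    have hpow : (0:ℝ) < (n:ℝ)^(2*k-1) := by positivity
    obtain ⟨h1, -⟩ := Stmt19.hook_sandwich k hk hcn
    have key : (((n - k*k)^(2*k-1) : ℕ) : ℝ) ≤
        ((hook k k n).ncard : ℝ) *
          ((Nat.factorial k : ℝ) * (Nat.factorial k : ℝ) * (Nat.factorial (2*k-1) : ℝ)) := by
      calc (((n - k*k)^(2*k-1) : ℕ) : ℝ)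
          ≤ (((2*k-1).factorial * (k.factorial * k.factorial) * (hook k k n).ncard : ℕ) : ℝ) :=
            Nat.cast_le.mpr h1
      _ = _ := by push_cast; ring
    have e1 : (1 - ((k*k:ℕ):ℝ)/n)^(2*k-1) = (((n - k*k)^(2*k-1) : ℕ) : ℝ) / (n:ℝ)^(2*k-1) := by
      rw [Nat.cast_pow, Nat.cast_sub hcn, ← div_pow]
      congr 1
      rw [sub_div, div_self hnpos.ne']
    rw [e1]
    exact (div_le_div_iff_of_pos_right hpow).mpr key
  · filter_upwards [eventually_ge_atTop (k*k+1)] with n hn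
    have hcn : k*k ≤ n := by omega
    have hnpos : (0:ℝ) < (n:ℝ) := by
      have : 1 ≤ n := by omega
      exact_mod_cast Nat.lt_of_lt_of_le Nat.zero_lt_one this
    have hpow : (0:ℝ) < (n:ℝ)^(2*k-1) := by positivity
    obtain ⟨-, h2⟩ := Stmt19.hook_sandwich k hk hcn
    have key : ((hook k k n).ncard : ℝ) *
          ((Nat.factorial k : ℝ) * (Nat.factorial k : ℝ) * (Nat.factorial (2*k-1) : ℝ)) ≤
        (((n + C)^(2*k-1) : ℕ) : ℝ) := by
      calc ((hook k k n).ncard : ℝ) *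
          ((Nat.factorial k : ℝ) * (Nat.factorial k : ℝ) * (Nat.factorial (2*k-1) : ℝ))
          = (((2*k-1).factorial * (k.factorial * k.factorial) * (hook k k n).ncard : ℕ) : ℝ) := by
            push_cast; ring
      _ ≤ (((n + C)^(2*k-1) : ℕ) : ℝ) := Nat.cast_le.mpr h2
    have gen2 : ∀ a : ℕ, (1 + ((a:ℕ):ℝ)/(n:ℝ))^(2*k-1)
        = (((n + a)^(2*k-1) : ℕ) : ℝ) / (n:ℝ)^(2*k-1) := by
      intro a
      rw [Nat.cast_pow, Nat.cast_add, ← div_pow]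
      congr 1
      rw [add_div, div_self hnpos.ne']
    have e2 := gen2 C
    rw [e2]
    exact (div_le_div_iff_of_pos_right hpow).mpr key
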